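/- Let n ≥ 1, x_t, x_s, x_τ, β ∈ ℝⁿ, α ∈ ℝ, σ_i² ≥ 0, and σ_t², σ_s², σ_τ² ≥ 0, with σ_i² + σ_r² > 0 for each r ∈ {t, s, τ}. Let U_r = x_r'β + α + ε_r for r ∈ {t, s, τ}, where ε_t, ε_s, ε_τ are independent with ε_r ~ N(0, σ_i² + σ_r²). Then E[((U_t²U_s − U_s²U_t) + (U_s²U_τ − U_τ²U_s) + (U_τ²U_t − U_t²U_τ) − U_tU_s·(x_t − x_s)'β − U_sU_τ·(x_s − x_τ)'β − U_τU_t·(x_τ − x_t)'β − (U_τ − U_t)·σ_s² − (U_s − U_τ)·σ_t² − (U_t − U_s)·σ_τ²)·1{U_t>0, U_s>0, U_τ>0}] = 0. -/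

import Mathlib

open MeasureTheory Real Set Filter

/-- Density of the normal distribution `N(μ, σ²)` on `ℝ` (with `σ` the standard deviation). -/
noncomputable def normalPDF (μ σ u : ℝ) : ℝ :=
  (1 / (σ * Real.sqrt (2 * Real.pi))) * Real.exp (-(u - μ) ^ 2 / (2 * σ ^ 2))

lemma normalPDF_eq (μ σ u : ℝ) :
    normalPDF μ σ u = (1 / (σ * Real.sqrt (2 * Real.pi))) *
      Real.exp (-(1 / (2 * σ ^ 2)) * (u - μ) ^ 2) := by
  rw [normalPDF, show -(u - μ) ^ 2 / (2 * σ ^ 2) = -(1 / (2 * σ ^ 2)) * (u - μ) ^ 2 by ring]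

/-- Integrability of a quadratic polynomial against a normal density. -/
lemma integrable_quad_mul_normalPDF (μ σ A B C : ℝ) (hσ : 0 < σ) :
    Integrable (fun u : ℝ => (A * u ^ 2 + B * u + C) * normalPDF μ σ u) := by
  have hb : 0 < 1 / (2 * σ ^ 2) := by positivity
  have h0 : Integrable (fun x : ℝ => Real.exp (-(1 / (2 * σ ^ 2)) * x ^ 2)) :=
    integrable_exp_neg_mul_sq hb
  have h1 : Integrable (fun x : ℝ => x * Real.exp (-(1 / (2 * σ ^ 2)) * x ^ 2)) :=
    integrable_mul_exp_neg_mul_sq hb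
  have h2 : Integrable (fun x : ℝ => x ^ 2 * Real.exp (-(1 / (2 * σ ^ 2)) * x ^ 2)) := by
    have h := integrable_rpow_mul_exp_neg_mul_sq hb (s := 2) (by norm_num)
    refine h.congr (Filter.Eventually.of_forall fun x => ?_)
    norm_num [Real.rpow_natCast]
  have hg : Integrable (fun x : ℝ => (A * (x + μ) ^ 2 + B * (x + μ) + C) *
      ((1 / (σ * Real.sqrt (2 * Real.pi))) * Real.exp (-(1 / (2 * σ ^ 2)) * x ^ 2))) := by
    have h := ((h2.const_mul (A * (1 / (σ * Real.sqrt (2 * Real.pi))))).add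
      ((h1.const_mul ((2 * A * μ + B) * (1 / (σ * Real.sqrt (2 * Real.pi))))).add
       (h0.const_mul ((A * μ ^ 2 + B * μ + C) * (1 / (σ * Real.sqrt (2 * Real.pi)))))))
    refine h.congr (Filter.Eventually.of_forall fun x => ?_)
    simp only [Pi.add_apply]
    ring
  have h := hg.comp_sub_right μ
  refine h.congr (Filter.Eventually.of_forall fun u => ?_)
  simp only [normalPDF_eq]
  ring

/-- The key vanishing moment: `∫_(0,∞) (u² - μu - σ²) φ_{μ,σ}(u) du = 0`. -/
lemma integral_key_normalPDF (μ σ : ℝ) (hσ : 0 < σ) :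
    ∫ u in Ioi (0 : ℝ), (u ^ 2 - μ * u - σ ^ 2) * normalPDF μ σ u = 0 := by
  have hσ' : σ ≠ 0 := ne_of_gt hσ
  have hb : 0 < 1 / (2 * σ ^ 2) := by positivity
  simp only [normalPDF]
  have hderiv : ∀ x ∈ Ici (0 : ℝ),
      HasDerivAt (fun u : ℝ => -σ ^ 2 * (u * ((1 / (σ * Real.sqrt (2 * Real.pi)))
          * Real.exp (-(u - μ) ^ 2 / (2 * σ ^ 2)))))
        ((x ^ 2 - μ * x - σ ^ 2) * ((1 / (σ * Real.sqrt (2 * Real.pi)))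
          * Real.exp (-(x - μ) ^ 2 / (2 * σ ^ 2)))) x := by
    intro x _
    have h1 : HasDerivAt (fun u : ℝ => u - μ) 1 x := (hasDerivAt_id x).sub_const μ
    have h2 := ((h1.pow 2).neg).div_const (2 * σ ^ 2)
    have h3 := (h2.exp.const_mul (1 / (σ * Real.sqrt (2 * Real.pi))))
    have h4 := ((hasDerivAt_id x).mul h3).const_mul (-σ ^ 2)
    refine h4.congr_deriv ?_
    simp only [Pi.neg_apply, Pi.pow_apply, id]
    field_simp
    ring
  have hint : IntegrableOn
      (fun x : ℝ => (x ^ 2 - μ * x - σ ^ 2) * ((1 / (σ * Real.sqrt (2 * Real.pi)))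
        * Real.exp (-(x - μ) ^ 2 / (2 * σ ^ 2))))
      (Ioi (0 : ℝ)) := by
    refine ((integrable_quad_mul_normalPDF μ σ 1 (-μ) (-σ ^ 2) hσ).integrableOn).congr
      (Filter.Eventually.of_forall fun u => ?_)
    simp only [normalPDF]
    ring
  have htend : Tendsto (fun u : ℝ => -σ ^ 2 * (u * ((1 / (σ * Real.sqrt (2 * Real.pi)))
      * Real.exp (-(u - μ) ^ 2 / (2 * σ ^ 2))))) atTop (nhds 0) := by
    have hhalf : Tendsto (fun x : ℝ => Real.exp (-(1 / 2) * x)) atTop (nhds 0) := by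
      have hm : Tendsto (fun x : ℝ => (1 / 2 : ℝ) * x) atTop atTop :=
        Tendsto.const_mul_atTop (by norm_num) tendsto_id
      have h := tendsto_exp_neg_atTop_nhds_zero.comp hm
      refine h.congr fun x => ?_
      simp [Function.comp, neg_mul]
    have hx : Tendsto (fun x : ℝ => x * Real.exp (-(1 / (2 * σ ^ 2)) * x ^ 2)) atTop (nhds 0) := by
      have h := (rpow_mul_exp_neg_mul_sq_isLittleO_exp_neg hb 1).isBigO.trans_tendsto hhalf
      refine h.congr fun x => ?_
      rw [Real.rpow_one]
    have hsub : Tendsto (fun u : ℝ => u - μ) atTop atTop :=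
      tendsto_atTop_add_const_right atTop (-μ) tendsto_id
    have hcomp : Tendsto (fun u : ℝ => (u - μ) * Real.exp (-(1 / (2 * σ ^ 2)) * (u - μ) ^ 2))
        atTop (nhds 0) := hx.comp hsub
    have hexp0 : Tendsto (fun x : ℝ => Real.exp (-(1 / (2 * σ ^ 2)) * x ^ 2)) atTop (nhds 0) := by
      have hm : Tendsto (fun x : ℝ => (1 / (2 * σ ^ 2)) * x ^ 2) atTop atTop :=
        Tendsto.const_mul_atTop hb (tendsto_pow_atTop two_ne_zero)
      have h := tendsto_exp_neg_atTop_nhds_zero.comp hm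
      refine h.congr fun x => ?_
      simp [Function.comp, neg_mul]
    have hexpc : Tendsto (fun u : ℝ => Real.exp (-(1 / (2 * σ ^ 2)) * (u - μ) ^ 2))
        atTop (nhds 0) := hexp0.comp hsub
    have hmain : Tendsto
        (fun u : ℝ => ((u - μ) * Real.exp (-(1 / (2 * σ ^ 2)) * (u - μ) ^ 2)
          + μ * Real.exp (-(1 / (2 * σ ^ 2)) * (u - μ) ^ 2))
            * (-σ ^ 2 * (1 / (σ * Real.sqrt (2 * Real.pi)))))
        atTop (nhds 0) := by
      have h := (hcomp.add (hexpc.const_mul μ)).mul_const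
        (-σ ^ 2 * (1 / (σ * Real.sqrt (2 * Real.pi))))
      simpa using h
    refine hmain.congr fun u => ?_
    rw [show -(u - μ) ^ 2 / (2 * σ ^ 2) = -(1 / (2 * σ ^ 2)) * (u - μ) ^ 2 by ring]
    ring
  have hI := integral_Ioi_of_hasDerivAt_of_tendsto' hderiv hint htend
  rw [hI]
  simp

/-- Moment condition (Estm_h3) for the fixed-effects panel Tobit model with additively
decomposed variance `σ_{ir}² = σ_i² + σ_r²`: with `U_r ~ N(x_r'β + α, σ_i² + σ_r²)`,
`r ∈ {t, s, τ}`, independent, the cyclic sum over three periods eliminates `α` and `σ_i²`: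
`E[((U_t²U_s − U_s²U_t) + (U_s²U_τ − U_τ²U_s) + (U_τ²U_t − U_t²U_τ)
   − U_tU_s(x_t − x_s)'β − U_sU_τ(x_s − x_τ)'β − U_τU_t(x_τ − x_t)'β
   − (U_τ − U_t)σ_s² − (U_s − U_τ)σ_t² − (U_t − U_s)σ_τ²)·1{U_t>0,U_s>0,U_τ>0}] = 0`. -/
theorem panel_tobit_additive_variance_moment (n : ℕ) (hn : 1 ≤ n)
    (xt xs xτ β : Fin n → ℝ) (α : ℝ) (σi2 σt2 σs2 στ2 : ℝ)
    (hσi2 : 0 ≤ σi2) (hσt2 : 0 ≤ σt2) (hσs2 : 0 ≤ σs2) (hστ2 : 0 ≤ στ2)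
    (ht : 0 < σi2 + σt2) (hs : 0 < σi2 + σs2) (hτ : 0 < σi2 + στ2) :
    ∫ p in Set.Ioi (0 : ℝ) ×ˢ (Set.Ioi (0 : ℝ) ×ˢ Set.Ioi (0 : ℝ)),
        ((p.1 ^ 2 * p.2.1 - p.2.1 ^ 2 * p.1)
            + (p.2.1 ^ 2 * p.2.2 - p.2.2 ^ 2 * p.2.1)
            + (p.2.2 ^ 2 * p.1 - p.1 ^ 2 * p.2.2)
            - p.1 * p.2.1 * (∑ i, (xt i - xs i) * β i)
            - p.2.1 * p.2.2 * (∑ i, (xs i - xτ i) * β i)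
            - p.2.2 * p.1 * (∑ i, (xτ i - xt i) * β i)
            - (p.2.2 - p.1) * σs2 - (p.2.1 - p.2.2) * σt2 - (p.1 - p.2.1) * στ2)
          * (normalPDF (∑ i, xt i * β i + α) (Real.sqrt (σi2 + σt2)) p.1
              * (normalPDF (∑ i, xs i * β i + α) (Real.sqrt (σi2 + σs2)) p.2.1
                  * normalPDF (∑ i, xτ i * β i + α) (Real.sqrt (σi2 + στ2)) p.2.2)) = 0 := by
  have hσ1 : (0 : ℝ) < Real.sqrt (σi2 + σt2) := Real.sqrt_pos.mpr ht
  have hσ2 : (0 : ℝ) < Real.sqrt (σi2 + σs2) := Real.sqrt_pos.mpr hs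
  have hσ3 : (0 : ℝ) < Real.sqrt (σi2 + στ2) := Real.sqrt_pos.mpr hτ
  set m1 : ℝ := ∑ i, xt i * β i + α with hm1
  set m2 : ℝ := ∑ i, xs i * β i + α with hm2
  set m3 : ℝ := ∑ i, xτ i * β i + α with hm3
  set φ1 : ℝ → ℝ := normalPDF m1 (Real.sqrt (σi2 + σt2)) with hφ1
  set φ2 : ℝ → ℝ := normalPDF m2 (Real.sqrt (σi2 + σs2)) with hφ2
  set φ3 : ℝ → ℝ := normalPDF m3 (Real.sqrt (σi2 + στ2)) with hφ3
  have e12 : (∑ i, (xt i - xs i) * β i) = m1 - m2 := by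
    have h : ∑ i, (xt i - xs i) * β i = (∑ i, xt i * β i) - ∑ i, xs i * β i := by
      rw [← Finset.sum_sub_distrib]
      exact Finset.sum_congr rfl fun i _ => by ring
    rw [h, hm1, hm2]; ring
  have e23 : (∑ i, (xs i - xτ i) * β i) = m2 - m3 := by
    have h : ∑ i, (xs i - xτ i) * β i = (∑ i, xs i * β i) - ∑ i, xτ i * β i := by
      rw [← Finset.sum_sub_distrib]
      exact Finset.sum_congr rfl fun i _ => by ring
    rw [h, hm2, hm3]; ring
  have e31 : (∑ i, (xτ i - xt i) * β i) = m3 - m1 := by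
    have h : ∑ i, (xτ i - xt i) * β i = (∑ i, xτ i * β i) - ∑ i, xt i * β i := by
      rw [← Finset.sum_sub_distrib]
      exact Finset.sum_congr rfl fun i _ => by ring
    rw [h, hm3, hm1]; ring
  rw [e12, e23, e31]
  -- rewrite the restricted volume as a product of restricted measures
  set S : Set ℝ := Ioi (0 : ℝ) with hS
  have hm : (volume : Measure (ℝ × ℝ × ℝ)).restrict (S ×ˢ (S ×ˢ S))
      = (volume.restrict S).prod ((volume.restrict S).prod (volume.restrict S)) := by
    rw [Measure.volume_eq_prod, ← Measure.prod_restrict, Measure.volume_eq_prod,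
      ← Measure.prod_restrict]
  rw [hm]
  set ν : Measure ℝ := volume.restrict S with hν
  -- one-dimensional integrabilities
  have ia1 : Integrable (fun u : ℝ => (u ^ 2 - m1 * u - (σi2 + σt2)) * φ1 u) ν := by
    refine ((integrable_quad_mul_normalPDF m1 (Real.sqrt (σi2 + σt2)) 1 (-m1)
      (-(σi2 + σt2)) hσ1).restrict).congr (Filter.Eventually.of_forall fun u => by rw [hφ1]; ring)
  have ia2 : Integrable (fun u : ℝ => (u ^ 2 - m2 * u - (σi2 + σs2)) * φ2 u) ν := by
    refine ((integrable_quad_mul_normalPDF m2 (Real.sqrt (σi2 + σs2)) 1 (-m2)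
      (-(σi2 + σs2)) hσ2).restrict).congr (Filter.Eventually.of_forall fun u => by rw [hφ2]; ring)
  have ia3 : Integrable (fun u : ℝ => (u ^ 2 - m3 * u - (σi2 + στ2)) * φ3 u) ν := by
    refine ((integrable_quad_mul_normalPDF m3 (Real.sqrt (σi2 + στ2)) 1 (-m3)
      (-(σi2 + στ2)) hσ3).restrict).congr (Filter.Eventually.of_forall fun u => by rw [hφ3]; ring)
  have il1 : Integrable (fun u : ℝ => u * φ1 u) ν := by
    refine ((integrable_quad_mul_normalPDF m1 (Real.sqrt (σi2 + σt2)) 0 1 0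
      hσ1).restrict).congr (Filter.Eventually.of_forall fun u => by rw [hφ1]; ring)
  have il2 : Integrable (fun u : ℝ => u * φ2 u) ν := by
    refine ((integrable_quad_mul_normalPDF m2 (Real.sqrt (σi2 + σs2)) 0 1 0
      hσ2).restrict).congr (Filter.Eventually.of_forall fun u => by rw [hφ2]; ring)
  have il3 : Integrable (fun u : ℝ => u * φ3 u) ν := by
    refine ((integrable_quad_mul_normalPDF m3 (Real.sqrt (σi2 + στ2)) 0 1 0
      hσ3).restrict).congr (Filter.Eventually.of_forall fun u => by rw [hφ3]; ring)
  have i01 : Integrable φ1 ν := by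
    refine ((integrable_quad_mul_normalPDF m1 (Real.sqrt (σi2 + σt2)) 0 0 1
      hσ1).restrict).congr (Filter.Eventually.of_forall fun u => by rw [hφ1]; ring)
  have i02 : Integrable φ2 ν := by
    refine ((integrable_quad_mul_normalPDF m2 (Real.sqrt (σi2 + σs2)) 0 0 1
      hσ2).restrict).congr (Filter.Eventually.of_forall fun u => by rw [hφ2]; ring)
  have i03 : Integrable φ3 ν := by
    refine ((integrable_quad_mul_normalPDF m3 (Real.sqrt (σi2 + στ2)) 0 0 1
      hσ3).restrict).congr (Filter.Eventually.of_forall fun u => by rw [hφ3]; ring)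
  -- key zero integrals
  have K1 : ∫ u, (u ^ 2 - m1 * u - (σi2 + σt2)) * φ1 u ∂ν = 0 := by
    have h := integral_key_normalPDF m1 (Real.sqrt (σi2 + σt2)) hσ1
    rw [Real.sq_sqrt ht.le] at h
    rw [hν, hS, hφ1]; exact h
  have K2 : ∫ u, (u ^ 2 - m2 * u - (σi2 + σs2)) * φ2 u ∂ν = 0 := by
    have h := integral_key_normalPDF m2 (Real.sqrt (σi2 + σs2)) hσ2
    rw [Real.sq_sqrt hs.le] at h
    rw [hν, hS, hφ2]; exact h
  have K3 : ∫ u, (u ^ 2 - m3 * u - (σi2 + στ2)) * φ3 u ∂ν = 0 := by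
    have h := integral_key_normalPDF m3 (Real.sqrt (σi2 + στ2)) hσ3
    rw [Real.sq_sqrt hτ.le] at h
    rw [hν, hS, hφ3]; exact h
  -- product integrabilities for the six terms
  have I1 : Integrable (fun p : ℝ × ℝ × ℝ =>
      ((p.1 ^ 2 - m1 * p.1 - (σi2 + σt2)) * φ1 p.1) * ((p.2.1 * φ2 p.2.1) * φ3 p.2.2))
      (ν.prod (ν.prod ν)) := ia1.mul_prod (il2.mul_prod i03)
  have I2 : Integrable (fun p : ℝ × ℝ × ℝ =>
      ((p.1 ^ 2 - m1 * p.1 - (σi2 + σt2)) * φ1 p.1) * (φ2 p.2.1 * (p.2.2 * φ3 p.2.2)))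
      (ν.prod (ν.prod ν)) := ia1.mul_prod (i02.mul_prod il3)
  have I3 : Integrable (fun p : ℝ × ℝ × ℝ =>
      φ1 p.1 * (((p.2.1 ^ 2 - m2 * p.2.1 - (σi2 + σs2)) * φ2 p.2.1) * (p.2.2 * φ3 p.2.2)))
      (ν.prod (ν.prod ν)) := i01.mul_prod (ia2.mul_prod il3)
  have I4 : Integrable (fun p : ℝ × ℝ × ℝ =>
      (p.1 * φ1 p.1) * (((p.2.1 ^ 2 - m2 * p.2.1 - (σi2 + σs2)) * φ2 p.2.1) * φ3 p.2.2))
      (ν.prod (ν.prod ν)) := il1.mul_prod (ia2.mul_prod i03)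
  have I5 : Integrable (fun p : ℝ × ℝ × ℝ =>
      (p.1 * φ1 p.1) * (φ2 p.2.1 * ((p.2.2 ^ 2 - m3 * p.2.2 - (σi2 + στ2)) * φ3 p.2.2)))
      (ν.prod (ν.prod ν)) := il1.mul_prod (i02.mul_prod ia3)
  have I6 : Integrable (fun p : ℝ × ℝ × ℝ =>
      φ1 p.1 * ((p.2.1 * φ2 p.2.1) * ((p.2.2 ^ 2 - m3 * p.2.2 - (σi2 + στ2)) * φ3 p.2.2)))
      (ν.prod (ν.prod ν)) := i01.mul_prod (il2.mul_prod ia3)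
  -- each term integrates to zero
  have Z1 : ∫ p : ℝ × ℝ × ℝ,
      ((p.1 ^ 2 - m1 * p.1 - (σi2 + σt2)) * φ1 p.1) * ((p.2.1 * φ2 p.2.1) * φ3 p.2.2)
      ∂(ν.prod (ν.prod ν)) = 0 := by
    have h : ∫ p : ℝ × ℝ × ℝ,
        ((p.1 ^ 2 - m1 * p.1 - (σi2 + σt2)) * φ1 p.1) * ((p.2.1 * φ2 p.2.1) * φ3 p.2.2)
        ∂(ν.prod (ν.prod ν))
        = (∫ u, (u ^ 2 - m1 * u - (σi2 + σt2)) * φ1 u ∂ν)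
          * ∫ q : ℝ × ℝ, (q.1 * φ2 q.1) * φ3 q.2 ∂(ν.prod ν) :=
      integral_prod_mul (fun u : ℝ => (u ^ 2 - m1 * u - (σi2 + σt2)) * φ1 u)
        (fun q : ℝ × ℝ => (q.1 * φ2 q.1) * φ3 q.2)
    rw [h, K1, zero_mul]
  have Z2 : ∫ p : ℝ × ℝ × ℝ,
      ((p.1 ^ 2 - m1 * p.1 - (σi2 + σt2)) * φ1 p.1) * (φ2 p.2.1 * (p.2.2 * φ3 p.2.2))
      ∂(ν.prod (ν.prod ν)) = 0 := by
    have h : ∫ p : ℝ × ℝ × ℝ,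
        ((p.1 ^ 2 - m1 * p.1 - (σi2 + σt2)) * φ1 p.1) * (φ2 p.2.1 * (p.2.2 * φ3 p.2.2))
        ∂(ν.prod (ν.prod ν))
        = (∫ u, (u ^ 2 - m1 * u - (σi2 + σt2)) * φ1 u ∂ν)
          * ∫ q : ℝ × ℝ, φ2 q.1 * (q.2 * φ3 q.2) ∂(ν.prod ν) :=
      integral_prod_mul (fun u : ℝ => (u ^ 2 - m1 * u - (σi2 + σt2)) * φ1 u)
        (fun q : ℝ × ℝ => φ2 q.1 * (q.2 * φ3 q.2))
    rw [h, K1, zero_mul]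
  have Z3 : ∫ p : ℝ × ℝ × ℝ,
      φ1 p.1 * (((p.2.1 ^ 2 - m2 * p.2.1 - (σi2 + σs2)) * φ2 p.2.1) * (p.2.2 * φ3 p.2.2))
      ∂(ν.prod (ν.prod ν)) = 0 := by
    have h : ∫ p : ℝ × ℝ × ℝ,
        φ1 p.1 * (((p.2.1 ^ 2 - m2 * p.2.1 - (σi2 + σs2)) * φ2 p.2.1) * (p.2.2 * φ3 p.2.2))
        ∂(ν.prod (ν.prod ν))
        = (∫ u, φ1 u ∂ν)
          * ∫ q : ℝ × ℝ, ((q.1 ^ 2 - m2 * q.1 - (σi2 + σs2)) * φ2 q.1) * (q.2 * φ3 q.2)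
            ∂(ν.prod ν) :=
      integral_prod_mul (fun u : ℝ => φ1 u)
        (fun q : ℝ × ℝ => ((q.1 ^ 2 - m2 * q.1 - (σi2 + σs2)) * φ2 q.1) * (q.2 * φ3 q.2))
    have h2 : ∫ q : ℝ × ℝ, ((q.1 ^ 2 - m2 * q.1 - (σi2 + σs2)) * φ2 q.1) * (q.2 * φ3 q.2)
        ∂(ν.prod ν)
        = (∫ v, (v ^ 2 - m2 * v - (σi2 + σs2)) * φ2 v ∂ν) * ∫ w, w * φ3 w ∂ν :=
      integral_prod_mul (fun v : ℝ => (v ^ 2 - m2 * v - (σi2 + σs2)) * φ2 v)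
        (fun w : ℝ => w * φ3 w)
    rw [h, h2, K2, zero_mul, mul_zero]
  have Z4 : ∫ p : ℝ × ℝ × ℝ,
      (p.1 * φ1 p.1) * (((p.2.1 ^ 2 - m2 * p.2.1 - (σi2 + σs2)) * φ2 p.2.1) * φ3 p.2.2)
      ∂(ν.prod (ν.prod ν)) = 0 := by
    have h : ∫ p : ℝ × ℝ × ℝ,
        (p.1 * φ1 p.1) * (((p.2.1 ^ 2 - m2 * p.2.1 - (σi2 + σs2)) * φ2 p.2.1) * φ3 p.2.2)
        ∂(ν.prod (ν.prod ν))
        = (∫ u, u * φ1 u ∂ν)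
          * ∫ q : ℝ × ℝ, ((q.1 ^ 2 - m2 * q.1 - (σi2 + σs2)) * φ2 q.1) * φ3 q.2 ∂(ν.prod ν) :=
      integral_prod_mul (fun u : ℝ => u * φ1 u)
        (fun q : ℝ × ℝ => ((q.1 ^ 2 - m2 * q.1 - (σi2 + σs2)) * φ2 q.1) * φ3 q.2)
    have h2 : ∫ q : ℝ × ℝ, ((q.1 ^ 2 - m2 * q.1 - (σi2 + σs2)) * φ2 q.1) * φ3 q.2 ∂(ν.prod ν)
        = (∫ v, (v ^ 2 - m2 * v - (σi2 + σs2)) * φ2 v ∂ν) * ∫ w, φ3 w ∂ν :=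
      integral_prod_mul (fun v : ℝ => (v ^ 2 - m2 * v - (σi2 + σs2)) * φ2 v)
        (fun w : ℝ => φ3 w)
    rw [h, h2, K2, zero_mul, mul_zero]
  have Z5 : ∫ p : ℝ × ℝ × ℝ,
      (p.1 * φ1 p.1) * (φ2 p.2.1 * ((p.2.2 ^ 2 - m3 * p.2.2 - (σi2 + στ2)) * φ3 p.2.2))
      ∂(ν.prod (ν.prod ν)) = 0 := by
    have h : ∫ p : ℝ × ℝ × ℝ,
        (p.1 * φ1 p.1) * (φ2 p.2.1 * ((p.2.2 ^ 2 - m3 * p.2.2 - (σi2 + στ2)) * φ3 p.2.2))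
        ∂(ν.prod (ν.prod ν))
        = (∫ u, u * φ1 u ∂ν)
          * ∫ q : ℝ × ℝ, φ2 q.1 * ((q.2 ^ 2 - m3 * q.2 - (σi2 + στ2)) * φ3 q.2) ∂(ν.prod ν) :=
      integral_prod_mul (fun u : ℝ => u * φ1 u)
        (fun q : ℝ × ℝ => φ2 q.1 * ((q.2 ^ 2 - m3 * q.2 - (σi2 + στ2)) * φ3 q.2))
    have h2 : ∫ q : ℝ × ℝ, φ2 q.1 * ((q.2 ^ 2 - m3 * q.2 - (σi2 + στ2)) * φ3 q.2) ∂(ν.prod ν)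
        = (∫ v, φ2 v ∂ν) * ∫ w, (w ^ 2 - m3 * w - (σi2 + στ2)) * φ3 w ∂ν :=
      integral_prod_mul (fun v : ℝ => φ2 v)
        (fun w : ℝ => (w ^ 2 - m3 * w - (σi2 + στ2)) * φ3 w)
    rw [h, h2, K3, mul_zero, mul_zero]
  have Z6 : ∫ p : ℝ × ℝ × ℝ,
      φ1 p.1 * ((p.2.1 * φ2 p.2.1) * ((p.2.2 ^ 2 - m3 * p.2.2 - (σi2 + στ2)) * φ3 p.2.2))
      ∂(ν.prod (ν.prod ν)) = 0 := by
    have h : ∫ p : ℝ × ℝ × ℝ,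
        φ1 p.1 * ((p.2.1 * φ2 p.2.1) * ((p.2.2 ^ 2 - m3 * p.2.2 - (σi2 + στ2)) * φ3 p.2.2))
        ∂(ν.prod (ν.prod ν))
        = (∫ u, φ1 u ∂ν)
          * ∫ q : ℝ × ℝ, (q.1 * φ2 q.1) * ((q.2 ^ 2 - m3 * q.2 - (σi2 + στ2)) * φ3 q.2)
            ∂(ν.prod ν) :=
      integral_prod_mul (fun u : ℝ => φ1 u)
        (fun q : ℝ × ℝ => (q.1 * φ2 q.1) * ((q.2 ^ 2 - m3 * q.2 - (σi2 + στ2)) * φ3 q.2))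
    have h2 : ∫ q : ℝ × ℝ, (q.1 * φ2 q.1) * ((q.2 ^ 2 - m3 * q.2 - (σi2 + στ2)) * φ3 q.2)
        ∂(ν.prod ν)
        = (∫ v, v * φ2 v ∂ν) * ∫ w, (w ^ 2 - m3 * w - (σi2 + στ2)) * φ3 w ∂ν :=
      integral_prod_mul (fun v : ℝ => v * φ2 v)
        (fun w : ℝ => (w ^ 2 - m3 * w - (σi2 + στ2)) * φ3 w)
    rw [h, h2, K3, mul_zero, mul_zero]
  -- build up the value of the decomposed integral
  have J2 : Integrable (fun p : ℝ × ℝ × ℝ =>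
      ((p.1 ^ 2 - m1 * p.1 - (σi2 + σt2)) * φ1 p.1) * ((p.2.1 * φ2 p.2.1) * φ3 p.2.2)
      - ((p.1 ^ 2 - m1 * p.1 - (σi2 + σt2)) * φ1 p.1) * (φ2 p.2.1 * (p.2.2 * φ3 p.2.2)))
      (ν.prod (ν.prod ν)) := I1.sub I2
  have J3 : Integrable (fun p : ℝ × ℝ × ℝ =>
      (((p.1 ^ 2 - m1 * p.1 - (σi2 + σt2)) * φ1 p.1) * ((p.2.1 * φ2 p.2.1) * φ3 p.2.2)
      - ((p.1 ^ 2 - m1 * p.1 - (σi2 + σt2)) * φ1 p.1) * (φ2 p.2.1 * (p.2.2 * φ3 p.2.2)))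
      + φ1 p.1 * (((p.2.1 ^ 2 - m2 * p.2.1 - (σi2 + σs2)) * φ2 p.2.1) * (p.2.2 * φ3 p.2.2)))
      (ν.prod (ν.prod ν)) := J2.add I3
  have J4 : Integrable (fun p : ℝ × ℝ × ℝ =>
      ((((p.1 ^ 2 - m1 * p.1 - (σi2 + σt2)) * φ1 p.1) * ((p.2.1 * φ2 p.2.1) * φ3 p.2.2)
      - ((p.1 ^ 2 - m1 * p.1 - (σi2 + σt2)) * φ1 p.1) * (φ2 p.2.1 * (p.2.2 * φ3 p.2.2)))
      + φ1 p.1 * (((p.2.1 ^ 2 - m2 * p.2.1 - (σi2 + σs2)) * φ2 p.2.1) * (p.2.2 * φ3 p.2.2)))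
      - (p.1 * φ1 p.1) * (((p.2.1 ^ 2 - m2 * p.2.1 - (σi2 + σs2)) * φ2 p.2.1) * φ3 p.2.2))
      (ν.prod (ν.prod ν)) := J3.sub I4
  have J5 : Integrable (fun p : ℝ × ℝ × ℝ =>
      (((((p.1 ^ 2 - m1 * p.1 - (σi2 + σt2)) * φ1 p.1) * ((p.2.1 * φ2 p.2.1) * φ3 p.2.2)
      - ((p.1 ^ 2 - m1 * p.1 - (σi2 + σt2)) * φ1 p.1) * (φ2 p.2.1 * (p.2.2 * φ3 p.2.2)))
      + φ1 p.1 * (((p.2.1 ^ 2 - m2 * p.2.1 - (σi2 + σs2)) * φ2 p.2.1) * (p.2.2 * φ3 p.2.2)))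
      - (p.1 * φ1 p.1) * (((p.2.1 ^ 2 - m2 * p.2.1 - (σi2 + σs2)) * φ2 p.2.1) * φ3 p.2.2))
      + (p.1 * φ1 p.1) * (φ2 p.2.1 * ((p.2.2 ^ 2 - m3 * p.2.2 - (σi2 + στ2)) * φ3 p.2.2)))
      (ν.prod (ν.prod ν)) := J4.add I5
  have V2 : ∫ p : ℝ × ℝ × ℝ,
      (((p.1 ^ 2 - m1 * p.1 - (σi2 + σt2)) * φ1 p.1) * ((p.2.1 * φ2 p.2.1) * φ3 p.2.2)
      - ((p.1 ^ 2 - m1 * p.1 - (σi2 + σt2)) * φ1 p.1) * (φ2 p.2.1 * (p.2.2 * φ3 p.2.2)))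
      ∂(ν.prod (ν.prod ν)) = 0 := by
    have h : ∫ p : ℝ × ℝ × ℝ,
        (((p.1 ^ 2 - m1 * p.1 - (σi2 + σt2)) * φ1 p.1) * ((p.2.1 * φ2 p.2.1) * φ3 p.2.2)
        - ((p.1 ^ 2 - m1 * p.1 - (σi2 + σt2)) * φ1 p.1) * (φ2 p.2.1 * (p.2.2 * φ3 p.2.2)))
        ∂(ν.prod (ν.prod ν))
        = (∫ p : ℝ × ℝ × ℝ,
            ((p.1 ^ 2 - m1 * p.1 - (σi2 + σt2)) * φ1 p.1) * ((p.2.1 * φ2 p.2.1) * φ3 p.2.2)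
            ∂(ν.prod (ν.prod ν)))
        - ∫ p : ℝ × ℝ × ℝ,
            ((p.1 ^ 2 - m1 * p.1 - (σi2 + σt2)) * φ1 p.1) * (φ2 p.2.1 * (p.2.2 * φ3 p.2.2))
            ∂(ν.prod (ν.prod ν)) := integral_sub I1 I2
    rw [h, Z1, Z2, sub_zero]
  have V3 : ∫ p : ℝ × ℝ × ℝ,
      ((((p.1 ^ 2 - m1 * p.1 - (σi2 + σt2)) * φ1 p.1) * ((p.2.1 * φ2 p.2.1) * φ3 p.2.2)
      - ((p.1 ^ 2 - m1 * p.1 - (σi2 + σt2)) * φ1 p.1) * (φ2 p.2.1 * (p.2.2 * φ3 p.2.2)))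
      + φ1 p.1 * (((p.2.1 ^ 2 - m2 * p.2.1 - (σi2 + σs2)) * φ2 p.2.1) * (p.2.2 * φ3 p.2.2)))
      ∂(ν.prod (ν.prod ν)) = 0 := by
    have h := integral_add J2 I3
    rw [h, V2, Z3, add_zero]
  have V4 : ∫ p : ℝ × ℝ × ℝ,
      (((((p.1 ^ 2 - m1 * p.1 - (σi2 + σt2)) * φ1 p.1) * ((p.2.1 * φ2 p.2.1) * φ3 p.2.2)
      - ((p.1 ^ 2 - m1 * p.1 - (σi2 + σt2)) * φ1 p.1) * (φ2 p.2.1 * (p.2.2 * φ3 p.2.2)))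
      + φ1 p.1 * (((p.2.1 ^ 2 - m2 * p.2.1 - (σi2 + σs2)) * φ2 p.2.1) * (p.2.2 * φ3 p.2.2)))
      - (p.1 * φ1 p.1) * (((p.2.1 ^ 2 - m2 * p.2.1 - (σi2 + σs2)) * φ2 p.2.1) * φ3 p.2.2))
      ∂(ν.prod (ν.prod ν)) = 0 := by
    have h := integral_sub J3 I4
    rw [h, V3, Z4, sub_zero]
  have V5 : ∫ p : ℝ × ℝ × ℝ,
      ((((((p.1 ^ 2 - m1 * p.1 - (σi2 + σt2)) * φ1 p.1) * ((p.2.1 * φ2 p.2.1) * φ3 p.2.2)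
      - ((p.1 ^ 2 - m1 * p.1 - (σi2 + σt2)) * φ1 p.1) * (φ2 p.2.1 * (p.2.2 * φ3 p.2.2)))
      + φ1 p.1 * (((p.2.1 ^ 2 - m2 * p.2.1 - (σi2 + σs2)) * φ2 p.2.1) * (p.2.2 * φ3 p.2.2)))
      - (p.1 * φ1 p.1) * (((p.2.1 ^ 2 - m2 * p.2.1 - (σi2 + σs2)) * φ2 p.2.1) * φ3 p.2.2))
      + (p.1 * φ1 p.1) * (φ2 p.2.1 * ((p.2.2 ^ 2 - m3 * p.2.2 - (σi2 + στ2)) * φ3 p.2.2)))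
      ∂(ν.prod (ν.prod ν)) = 0 := by
    have h := integral_add J4 I5
    rw [h, V4, Z5, add_zero]
  have V6 : ∫ p : ℝ × ℝ × ℝ,
      (((((((p.1 ^ 2 - m1 * p.1 - (σi2 + σt2)) * φ1 p.1) * ((p.2.1 * φ2 p.2.1) * φ3 p.2.2)
      - ((p.1 ^ 2 - m1 * p.1 - (σi2 + σt2)) * φ1 p.1) * (φ2 p.2.1 * (p.2.2 * φ3 p.2.2)))
      + φ1 p.1 * (((p.2.1 ^ 2 - m2 * p.2.1 - (σi2 + σs2)) * φ2 p.2.1) * (p.2.2 * φ3 p.2.2)))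
      - (p.1 * φ1 p.1) * (((p.2.1 ^ 2 - m2 * p.2.1 - (σi2 + σs2)) * φ2 p.2.1) * φ3 p.2.2))
      + (p.1 * φ1 p.1) * (φ2 p.2.1 * ((p.2.2 ^ 2 - m3 * p.2.2 - (σi2 + στ2)) * φ3 p.2.2)))
      - φ1 p.1 * ((p.2.1 * φ2 p.2.1) * ((p.2.2 ^ 2 - m3 * p.2.2 - (σi2 + στ2)) * φ3 p.2.2)))
      ∂(ν.prod (ν.prod ν)) = 0 := by
    have h := integral_sub J5 I6
    rw [h, V5, Z6, sub_zero]
  refine (integral_congr_ae (Filter.Eventually.of_forall fun p : ℝ × ℝ × ℝ => ?_) :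
      _ = ∫ p : ℝ × ℝ × ℝ,
      (((((((p.1 ^ 2 - m1 * p.1 - (σi2 + σt2)) * φ1 p.1) * ((p.2.1 * φ2 p.2.1) * φ3 p.2.2)
      - ((p.1 ^ 2 - m1 * p.1 - (σi2 + σt2)) * φ1 p.1) * (φ2 p.2.1 * (p.2.2 * φ3 p.2.2)))
      + φ1 p.1 * (((p.2.1 ^ 2 - m2 * p.2.1 - (σi2 + σs2)) * φ2 p.2.1) * (p.2.2 * φ3 p.2.2)))
      - (p.1 * φ1 p.1) * (((p.2.1 ^ 2 - m2 * p.2.1 - (σi2 + σs2)) * φ2 p.2.1) * φ3 p.2.2))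
      + (p.1 * φ1 p.1) * (φ2 p.2.1 * ((p.2.2 ^ 2 - m3 * p.2.2 - (σi2 + στ2)) * φ3 p.2.2)))
      - φ1 p.1 * ((p.2.1 * φ2 p.2.1) * ((p.2.2 ^ 2 - m3 * p.2.2 - (σi2 + στ2)) * φ3 p.2.2)))
      ∂(ν.prod (ν.prod ν))).trans ?_
  · ring
  · exact V6
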